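/- arXiv:quant-ph/0410063 — 2 statements merged into one kernel-verified Lean document; each statement's English description precedes it below -/
import Mathlib

section
/- The maximal p-norm of the Werner–Holevo channel Φ_d equals ν_p(Φ_d) = (d−1)^{(1−p)/p} for all p ≥ 1 and d ≥ 2. -/
open ComplexOrder

/-- The Schatten `p`-norm of a Hermitian matrix, `(∑ |eigenvalues|^p)^(1/p)`
(defined to be `0` on non-Hermitian matrices). -/
noncomputable def schattenNorm (p : ℝ) {n : Type*} [Fintype n] [DecidableEq n]
    (A : Matrix n n ℂ) : ℝ :=
  if h : A.IsHermitian then (∑ i, |h.eigenvalues i| ^ p) ^ (1 / p) else 0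

/-- The maximal `p`-norm of a channel: the supremum of `‖Φ(ρ)‖_p` over density matrices. -/
noncomputable def maxPNorm (p : ℝ) {ι : Type*} [Fintype ι] [DecidableEq ι]
    (Φ : Matrix ι ι ℂ → Matrix ι ι ℂ) : ℝ :=
  sSup {x | ∃ ρ : Matrix ι ι ℂ, ρ.PosSemidef ∧ ρ.trace = 1 ∧ x = schattenNorm p (Φ ρ)}

/-- The Werner–Holevo map `Φ_d(μ) = (1/(d-1)) (I·Tr(μ) − μ^T)` on `d × d` complex matrices. -/
noncomputable def WernerHolevo (d : ℕ) (μ : Matrix (Fin d) (Fin d) ℂ) :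
    Matrix (Fin d) (Fin d) ℂ :=
  (1 / ((d : ℂ) - 1)) • (μ.trace • (1 : Matrix (Fin d) (Fin d) ℂ) - μ.transpose)

namespace StmtAux

open Matrix

variable {n : Type*} [Fintype n] [DecidableEq n]

lemma star_dot_self {A : Matrix n n ℂ} (hA : A.IsHermitian) (i : n) :
    star ⇑(hA.eigenvectorBasis i) ⬝ᵥ ⇑(hA.eigenvectorBasis i) = 1 := by
  rw [dotProduct_comm, ← EuclideanSpace.inner_eq_star_dotProduct, inner_self_eq_norm_sq_to_K,
    hA.eigenvectorBasis.orthonormal.1 i]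
  norm_num

lemma trace_eq_sum_eig {A : Matrix n n ℂ} (hA : A.IsHermitian) :
    A.trace = ∑ i, (hA.eigenvalues i : ℂ) := by
  conv_lhs => rw [hA.spectral_theorem, Unitary.conjStarAlgAut_apply]
  rw [Matrix.trace_mul_cycle,
    show (star (hA.eigenvectorUnitary : Matrix n n ℂ)) * (hA.eigenvectorUnitary : Matrix n n ℂ) = 1
      from Unitary.coe_star_mul_self _, one_mul, Matrix.trace_diagonal]
  rfl

lemma star_dot_mulVec {A : Matrix n n ℂ} (hA : A.IsHermitian) (i : n) :
    star ⇑(hA.eigenvectorBasis i) ⬝ᵥ (A *ᵥ ⇑(hA.eigenvectorBasis i)) = (hA.eigenvalues i : ℂ) := by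
  rw [hA.mulVec_eigenvectorBasis, dotProduct_smul, star_dot_self hA i]
  simp [RCLike.real_smul_eq_coe_mul]

lemma eig_le_of_psd {A : Matrix n n ℂ} (hA : A.IsHermitian) (c : ℝ)
    (h : (((c : ℂ)) • (1 : Matrix n n ℂ) - A).PosSemidef) (i : n) : hA.eigenvalues i ≤ c := by
  have h2 := h.dotProduct_mulVec_nonneg ⇑(hA.eigenvectorBasis i)
  rw [Matrix.sub_mulVec, dotProduct_sub, Matrix.smul_mulVec, Matrix.one_mulVec,
    dotProduct_smul, star_dot_self hA i, star_dot_mulVec hA i, smul_eq_mul, mul_one] at h2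
  rw [← Complex.ofReal_sub, Complex.zero_le_real] at h2
  linarith

lemma one_sub_psd {B : Matrix n n ℂ} (hB : B.PosSemidef) (ht : B.trace = 1) :
    ((1 : Matrix n n ℂ) - B).PosSemidef := by
  have hsum : ∑ i, hB.1.eigenvalues i = 1 := by
    have h2 : ((∑ i, hB.1.eigenvalues i : ℝ) : ℂ) = 1 := by
      push_cast
      rw [← trace_eq_sum_eig hB.1]
      exact ht
    exact_mod_cast h2
  have hle : ∀ i, hB.1.eigenvalues i ≤ 1 := by
    intro i
    rw [← hsum]
    exact Finset.single_le_sum (fun j _ => hB.eigenvalues_nonneg j) (Finset.mem_univ i)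
  have key : (1 : Matrix n n ℂ) - B =
      (hB.1.eigenvectorUnitary : Matrix n n ℂ) *
        Matrix.diagonal (fun i => 1 - (hB.1.eigenvalues i : ℂ)) *
        (hB.1.eigenvectorUnitary : Matrix n n ℂ)ᴴ := by
    conv_lhs => rw [hB.1.spectral_theorem, Unitary.conjStarAlgAut_apply]
    rw [← Matrix.star_eq_conjTranspose]
    rw [show Matrix.diagonal (fun i => 1 - (hB.1.eigenvalues i : ℂ)) =
      1 - Matrix.diagonal (RCLike.ofReal ∘ hB.1.eigenvalues) by
        rw [← Matrix.diagonal_one, Matrix.diagonal_sub]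
        rfl]
    rw [Matrix.mul_sub, Matrix.sub_mul, mul_one,
      show (hB.1.eigenvectorUnitary : Matrix n n ℂ) * star (hB.1.eigenvectorUnitary : Matrix n n ℂ) = 1
        from Unitary.coe_mul_star_self _]
  rw [key]
  exact Matrix.PosSemidef.mul_mul_conjTranspose_same
    (Matrix.posSemidef_diagonal_iff.mpr fun i => by
      rw [show (1 : ℂ) - (hB.1.eigenvalues i : ℂ) = ((1 - hB.1.eigenvalues i : ℝ) : ℂ) by
        push_cast; ring, Complex.zero_le_real]
      linarith [hle i]) _

lemma psd_smul_real {M : Matrix n n ℂ} (hM : M.PosSemidef) {c : ℝ} (hc : 0 ≤ c) :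
    (((c : ℂ)) • M).PosSemidef := by
  apply Matrix.PosSemidef.of_dotProduct_mulVec_nonneg
  · unfold Matrix.IsHermitian
    rw [Matrix.conjTranspose_smul, hM.1.eq]
    simp [Complex.conj_ofReal]
  · intro x
    rw [Matrix.smul_mulVec, dotProduct_smul, smul_eq_mul]
    exact mul_nonneg (by rw [Complex.zero_le_real]; exact hc) (hM.dotProduct_mulVec_nonneg x)

lemma eig_quadratic {A : Matrix n n ℂ} (hA : A.IsHermitian) (c : ℝ)
    (h : A * A = (c : ℂ) • A) (i : n) : hA.eigenvalues i = 0 ∨ hA.eigenvalues i = c := by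
  set v := ⇑(hA.eigenvectorBasis i) with hv_def
  set μ := hA.eigenvalues i with hμ_def
  have hv : A *ᵥ v = μ • v := hA.mulVec_eigenvectorBasis i
  obtain ⟨j, hj⟩ : ∃ j, v j ≠ 0 := by
    by_contra hc
    push_neg at hc
    exact hA.eigenvectorBasis.orthonormal.ne_zero i (by ext j; exact hc j)
  have e1 : (A * A) *ᵥ v = μ • μ • v := by
    rw [← Matrix.mulVec_mulVec, hv, Matrix.mulVec_smul, hv]
  have e2 : ((c : ℂ) • A) *ᵥ v = (c : ℂ) • μ • v := by
    rw [Matrix.smul_mulVec, hv]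
  have e3 : μ • μ • v = (c : ℂ) • μ • v := by rw [← e1, ← e2, h]
  have e4 := congrFun e3 j
  simp only [Pi.smul_apply, Complex.real_smul, smul_eq_mul] at e4
  have e5 : ((μ : ℂ) * μ - (c : ℂ) * μ) * v j = 0 := by linear_combination e4
  rcases mul_eq_zero.mp e5 with h1 | h1
  · have h2 : (μ : ℂ) * ((μ : ℂ) - c) = 0 := by linear_combination h1
    rcases mul_eq_zero.mp h2 with h3 | h3
    · left; exact_mod_cast h3
    · right
      have : (μ : ℂ) = (c : ℂ) := by linear_combination h3
      exact_mod_cast this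
  · exact absurd h1 hj

lemma WH_eq (d : ℕ) (hd : 2 ≤ d) (ρ : Matrix (Fin d) (Fin d) ℂ) (htr : ρ.trace = 1) :
    WernerHolevo d ρ = ((((d:ℝ)-1)⁻¹ : ℝ) : ℂ) • ((1 : Matrix (Fin d) (Fin d) ℂ) - ρᵀ) := by
  unfold WernerHolevo
  rw [htr, one_smul]
  congr 1
  push_cast
  rw [one_div]

lemma WH_eigen (d : ℕ) (hd : 2 ≤ d) (ρ : Matrix (Fin d) (Fin d) ℂ) (hρ : ρ.PosSemidef)
    (htr : ρ.trace = 1) :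
    ∃ h : (WernerHolevo d ρ).IsHermitian,
      (∀ i, 0 ≤ h.eigenvalues i ∧ h.eigenvalues i ≤ ((d:ℝ)-1)⁻¹) ∧
      ∑ i, h.eigenvalues i = 1 := by
  have hd1 : (0:ℝ) < (d:ℝ) - 1 := by
    have : (2:ℝ) ≤ d := by exact_mod_cast hd
    linarith
  set cr : ℝ := ((d:ℝ)-1)⁻¹ with hcr
  have hcrnn : 0 ≤ cr := le_of_lt (by positivity)
  have hA_eq : WernerHolevo d ρ = (cr : ℂ) • ((1 : Matrix (Fin d) (Fin d) ℂ) - ρᵀ) :=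
    WH_eq d hd ρ htr
  have hBpsd : ρᵀ.PosSemidef := hρ.transpose
  have hBtr : ρᵀ.trace = 1 := by rw [Matrix.trace_transpose, htr]
  have hpsd : (WernerHolevo d ρ).PosSemidef := by
    rw [hA_eq]
    exact psd_smul_real (one_sub_psd hBpsd hBtr) hcrnn
  refine ⟨hpsd.1, fun i => ⟨hpsd.eigenvalues_nonneg i, ?_⟩, ?_⟩
  · refine eig_le_of_psd hpsd.1 cr ?_ i
    have : (cr : ℂ) • (1 : Matrix (Fin d) (Fin d) ℂ) - WernerHolevo d ρ = (cr : ℂ) • ρᵀ := by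
      rw [hA_eq, smul_sub, sub_sub_cancel]
    rw [this]
    exact psd_smul_real hBpsd hcrnn
  · have htrA : (WernerHolevo d ρ).trace = 1 := by
      rw [hA_eq, Matrix.trace_smul, Matrix.trace_sub, Matrix.trace_one, hBtr]
      simp only [smul_eq_mul]
      rw [Fintype.card_fin]
      rw [show ((d : ℕ) : ℂ) - 1 = (((d:ℝ) - 1 : ℝ) : ℂ) by push_cast; ring]
      rw [← Complex.ofReal_mul, inv_mul_cancel₀ (ne_of_gt hd1)]
      norm_num
    have h2 : ((∑ i, hpsd.1.eigenvalues i : ℝ) : ℂ) = 1 := by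
      push_cast
      rw [← trace_eq_sum_eig hpsd.1, htrA]
    exact_mod_cast h2

end StmtAux

open StmtAux Matrix in
/-- The maximal `p`-norm of the Werner–Holevo channel equals `(d-1)^((1-p)/p)`
for all `p ≥ 1` and `d ≥ 2`. -/
theorem stmt3 (d : ℕ) (hd : 2 ≤ d) (p : ℝ) (hp : 1 ≤ p) :
    maxPNorm p (WernerHolevo d) = ((d : ℝ) - 1) ^ ((1 - p) / p) := by
  haveI : NeZero d := ⟨by omega⟩
  have hd1 : (0:ℝ) < (d:ℝ) - 1 := by
    have : (2:ℝ) ≤ d := by exact_mod_cast hd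
    linarith
  have hp0 : 0 < p := lt_of_lt_of_le one_pos hp
  set cr : ℝ := ((d:ℝ)-1)⁻¹ with hcr
  have hcrpos : 0 < cr := by positivity
  -- the claimed value
  set M : ℝ := ((d : ℝ) - 1) ^ ((1 - p) / p) with hM
  have hMval : (cr ^ (p - 1)) ^ (1 / p) = M := by
    rw [hcr, Real.inv_rpow hd1.le, ← Real.rpow_neg hd1.le, neg_sub,
      ← Real.rpow_mul hd1.le, mul_one_div]
  -- upper bound for all density matrices
  have hxp : ∀ x : ℝ, x ≠ 0 → x ^ p = x ^ (p - 1) * x := by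
    intro x hx
    nth_rewrite 1 [show p = (p - 1) + 1 by ring]
    exact Real.rpow_add_one hx _
  have hub : ∀ ρ : Matrix (Fin d) (Fin d) ℂ, ρ.PosSemidef → ρ.trace = 1 →
      schattenNorm p (WernerHolevo d ρ) ≤ M := by
    intro ρ hρ htr
    obtain ⟨hA, hbound, hsum⟩ := WH_eigen d hd ρ hρ htr
    rw [schattenNorm, dif_pos hA]
    rw [← hMval]
    apply Real.rpow_le_rpow (Finset.sum_nonneg fun i _ => Real.rpow_nonneg (abs_nonneg _) p)
      _ (by positivity)
    calc ∑ i, |hA.eigenvalues i| ^ p ≤ ∑ i, cr ^ (p - 1) * hA.eigenvalues i := by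
          apply Finset.sum_le_sum
          intro i _
          obtain ⟨h0, h1⟩ := hbound i
          rw [abs_of_nonneg h0]
          rcases eq_or_lt_of_le h0 with h | h
          · rw [← h, Real.zero_rpow (ne_of_gt hp0), mul_zero]
          · rw [hxp _ (ne_of_gt h)]
            have : hA.eigenvalues i ^ (p - 1) ≤ cr ^ (p - 1) :=
              Real.rpow_le_rpow h0 h1 (by linarith)
            exact mul_le_mul_of_nonneg_right this h0
      _ = cr ^ (p - 1) := by rw [← Finset.mul_sum, hsum, mul_one]
  -- the maximizing density matrix
  set f : Fin d → ℂ := fun i => if i = 0 then 1 else 0 with hf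
  set ρ0 : Matrix (Fin d) (Fin d) ℂ := Matrix.diagonal f with hρ0
  have hρ0psd : ρ0.PosSemidef := by
    apply Matrix.PosSemidef.diagonal
    intro i
    by_cases h : i = 0 <;> simp [hf, h]
  have hρ0tr : ρ0.trace = 1 := by
    rw [hρ0, Matrix.trace_diagonal, hf]
    simp
  -- the image as a diagonal matrix
  have hA0diag : WernerHolevo d ρ0 =
      Matrix.diagonal (fun i => (cr : ℂ) * (1 - f i)) := by
    rw [WH_eq d hd ρ0 hρ0tr, hρ0, Matrix.diagonal_transpose]
    ext i j
    by_cases hij : i = j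
    · subst hij
      simp only [Matrix.smul_apply, Matrix.sub_apply, Matrix.one_apply_eq,
        Matrix.diagonal_apply_eq, smul_eq_mul]
      rfl
    · simp [Matrix.smul_apply, Matrix.diagonal_apply_ne _ hij, Matrix.one_apply_ne hij]
  have hquad : WernerHolevo d ρ0 * WernerHolevo d ρ0 = (cr : ℂ) • WernerHolevo d ρ0 := by
    rw [hA0diag, Matrix.diagonal_mul_diagonal]
    ext i j
    by_cases hij : i = j
    · subst hij
      simp only [Matrix.smul_apply, Matrix.diagonal_apply_eq, smul_eq_mul]
      by_cases h : i = 0 <;> simp [hf, h] <;> ring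
    · simp [Matrix.smul_apply, Matrix.diagonal_apply_ne _ hij]
  obtain ⟨hA0, hbound0, hsum0⟩ := WH_eigen d hd ρ0 hρ0psd hρ0tr
  have hval : schattenNorm p (WernerHolevo d ρ0) = M := by
    rw [schattenNorm, dif_pos hA0, ← hMval]
    congr 1
    have : ∀ i, |hA0.eigenvalues i| ^ p = cr ^ (p - 1) * hA0.eigenvalues i := by
      intro i
      rcases eig_quadratic hA0 cr hquad i with h | h
      · rw [h, abs_zero, Real.zero_rpow (ne_of_gt hp0), mul_zero]
      · rw [h, abs_of_nonneg hcrpos.le, hxp _ (ne_of_gt hcrpos)]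
    rw [Finset.sum_congr rfl fun i _ => this i, ← Finset.mul_sum, hsum0, mul_one]
  -- conclude
  have hmem : M ∈ {x | ∃ ρ : Matrix (Fin d) (Fin d) ℂ,
      ρ.PosSemidef ∧ ρ.trace = 1 ∧ x = schattenNorm p (WernerHolevo d ρ)} :=
    ⟨ρ0, hρ0psd, hρ0tr, hval.symm⟩
  have hubS : ∀ x ∈ {x | ∃ ρ : Matrix (Fin d) (Fin d) ℂ,
      ρ.PosSemidef ∧ ρ.trace = 1 ∧ x = schattenNorm p (WernerHolevo d ρ)}, x ≤ M := by
    rintro x ⟨ρ, hρ, htr, rfl⟩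
    exact hub ρ hρ htr
  exact le_antisymm (csSup_le ⟨M, hmem⟩ hubS) (le_csSup ⟨M, hubS⟩ hmem)
end

section
/- (Hermite–Genocchi) For a function g that is (n−1)-times continuously differentiable and distinct points x_1,…,x_n, the divided difference Σ_{j=1}^n g(x_j)/∏_{i≠j}(x_j − x_i) equals the integral of g^{(n−1)}(p_1 x_1 + … + p_n x_n) over the probability simplex {p_i ≥ 0, Σ p_i = 1}. -/
open MeasureTheory Finset

namespace HG

noncomputable section

def simplex (n : ℕ) : Set (Fin n → ℝ) := {t | (∀ i, 0 ≤ t i) ∧ ∑ i, t i ≤ 1}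

lemma isClosed_simplex (n : ℕ) : IsClosed (simplex n) := by
  have : simplex n = (⋂ i, {t : Fin n → ℝ | 0 ≤ t i}) ∩ {t : Fin n → ℝ | ∑ i, t i ≤ 1} := by
    ext t; simp [simplex, Set.mem_iInter]
  rw [this]
  exact ((isClosed_iInter fun i => isClosed_le continuous_const (continuous_apply i))).inter
    (isClosed_le (continuous_finset_sum _ fun i _ => continuous_apply i) continuous_const)

lemma measurableSet_simplex (n : ℕ) : MeasurableSet (simplex n) :=
  (isClosed_simplex n).measurableSet

lemma isCompact_simplex (n : ℕ) : IsCompact (simplex n) := by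
  refine IsCompact.of_isClosed_subset (isCompact_Icc (a := (0 : Fin n → ℝ)) (b := 1))
    (isClosed_simplex n) ?_
  rintro t ⟨h0, h1⟩
  refine ⟨fun i => h0 i, fun i => ?_⟩
  calc t i ≤ ∑ j, t j := Finset.single_le_sum (fun j _ => h0 j) (Finset.mem_univ i)
  _ ≤ 1 := h1


lemma simplex_slice (n : ℕ) (f : (Fin (n + 1) → ℝ) → ℝ) (hf : Continuous f) :
    ∫ t in simplex (n + 1), f t
      = ∫ u in simplex n, ∫ s in Set.Icc 0 (1 - ∑ i, u i), f (Fin.cons s u) := by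
  set e := MeasurableEquiv.piFinSuccAbove (fun _ : Fin (n + 1) => ℝ) 0 with he
  have hmp : MeasurePreserving e := volume_preserving_piFinSuccAbove (fun _ : Fin (n + 1) => ℝ) 0
  have hsymm : ∀ p : ℝ × (Fin n → ℝ), e.symm p = Fin.cons p.1 p.2 := by
    intro p
    simp [he, MeasurableEquiv.piFinSuccAbove, Fin.insertNthEquiv, Fin.insertNth_zero']
  set T : Set (ℝ × (Fin n → ℝ)) :=
    {p | p.2 ∈ simplex n ∧ p.1 ∈ Set.Icc 0 (1 - ∑ i, p.2 i)} with hT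
  have himg : e '' simplex (n + 1) = T := by
    rw [MeasurableEquiv.image_eq_preimage_symm]
    ext p
    simp only [Set.mem_preimage, hsymm, hT, Set.mem_setOf_eq, simplex, Set.mem_Icc,
      Fin.sum_cons, Fin.forall_fin_succ, Fin.cons_zero, Fin.cons_succ]
    constructor
    · rintro ⟨⟨h0, hi⟩, hs⟩
      refine ⟨⟨hi, by linarith⟩, h0, by linarith⟩
    · rintro ⟨⟨hi, _⟩, h0, hs⟩
      exact ⟨⟨h0, hi⟩, by linarith⟩
  have hcont2 : Continuous fun p : ℝ × (Fin n → ℝ) => f (Fin.cons p.1 p.2) := by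
    refine hf.comp (continuous_pi fun i => ?_)
    refine Fin.cases ?_ ?_ i
    · simpa using (continuous_fst : Continuous fun p : ℝ × (Fin n → ℝ) => p.1)
    · intro j; simp; exact (continuous_apply j).comp
        (continuous_snd : Continuous fun p : ℝ × (Fin n → ℝ) => p.2)
  have hcompT : IsCompact T := by
    rw [← himg]
    have : Continuous fun t : Fin (n + 1) → ℝ => ((t 0, fun j : Fin n => t j.succ) : ℝ × (Fin n → ℝ)) :=
      (continuous_apply 0).prodMk (continuous_pi fun j => continuous_apply j.succ)
    have hce : Continuous e := by
      convert this using 1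
      rfl
    exact (isCompact_simplex (n + 1)).image hce
  have hmeasT : MeasurableSet T := hcompT.isClosed.measurableSet
  have hint : Integrable (T.indicator fun p : ℝ × (Fin n → ℝ) => f (Fin.cons p.1 p.2)) (volume.prod volume) := by
    rw [MeasureTheory.integrable_indicator_iff hmeasT]
    exact hcont2.continuousOn.integrableOn_compact hcompT
  calc ∫ t in simplex (n + 1), f t
      = ∫ p in e '' simplex (n + 1), f (e.symm p) := by
        rw [hmp.setIntegral_image_emb e.measurableEmbedding]
        simp
    _ = ∫ p in T, f (Fin.cons p.1 p.2) := by
        rw [himg]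
        exact setIntegral_congr_fun hmeasT fun p _ => by rw [hsymm]
    _ = ∫ p, T.indicator (fun p : ℝ × (Fin n → ℝ) => f (Fin.cons p.1 p.2)) p
          ∂(volume.prod volume) := by
        rw [MeasureTheory.integral_indicator hmeasT, ← Measure.volume_eq_prod]
    _ = ∫ u, ∫ s, T.indicator (fun p : ℝ × (Fin n → ℝ) => f (Fin.cons p.1 p.2)) (s, u) := by
        exact MeasureTheory.integral_prod_symm _ hint
    _ = ∫ u, (simplex n).indicator
          (fun u => ∫ s in Set.Icc 0 (1 - ∑ i, u i), f (Fin.cons s u)) u := by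
        congr 1; ext u
        by_cases hu : u ∈ simplex n
        · rw [Set.indicator_of_mem hu, ← MeasureTheory.integral_indicator measurableSet_Icc]
          congr 1; ext s
          by_cases hs : s ∈ Set.Icc (0:ℝ) (1 - ∑ i, u i)
          · rw [Set.indicator_of_mem hs,
              Set.indicator_of_mem (show ((s, u) : ℝ × (Fin n → ℝ)) ∈ T from ⟨hu, hs⟩)]
          · rw [Set.indicator_of_notMem hs,
              Set.indicator_of_notMem (fun hc => hs (hc.2 : _))]
        · rw [Set.indicator_of_notMem hu]
          have hz : ∀ s : ℝ,
              T.indicator (fun p : ℝ × (Fin n → ℝ) => f (Fin.cons p.1 p.2)) (s, u) = 0 :=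
            fun s => Set.indicator_of_notMem (fun hc => hu (hc.1 : _)) _
          simp [hz]
    _ = ∫ u in simplex n, ∫ s in Set.Icc 0 (1 - ∑ i, u i), f (Fin.cons s u) := by
        rw [MeasureTheory.integral_indicator (measurableSet_simplex n)]


lemma ftc (n : ℕ) (g : ℝ → ℝ) (hg : ContDiff ℝ (n + 1) g) (A d c : ℝ) (hd : d ≠ 0)
    (hc : 0 ≤ c) :
    ∫ s in Set.Icc 0 c, iteratedDeriv (n + 1) g (A + s * d)
      = (iteratedDeriv n g (A + c * d) - iteratedDeriv n g A) / d := by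
  have hdiff : Differentiable ℝ (iteratedDeriv n g) :=
    hg.differentiable_iteratedDeriv n (by exact_mod_cast Nat.lt_succ_self n)
  have hcont : Continuous (iteratedDeriv (n + 1) g) :=
    hg.continuous_iteratedDeriv (n + 1) le_rfl
  have H : ∀ s ∈ Set.uIcc (0:ℝ) c,
      HasDerivAt (fun s => iteratedDeriv n g (A + s * d) / d)
        (iteratedDeriv (n + 1) g (A + s * d)) s := by
    intro s _
    have h1 : HasDerivAt (fun s : ℝ => A + s * d) d s := by
      simpa using ((hasDerivAt_id s).mul_const d).const_add A
    have h2 : HasDerivAt (iteratedDeriv n g)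
        (iteratedDeriv (n + 1) g (A + s * d)) (A + s * d) := by
      rw [iteratedDeriv_succ]
      exact (hdiff (A + s * d)).hasDerivAt
    have h3 := (h2.comp s h1).div_const d
    simpa [mul_div_cancel_right₀ _ hd] using h3
  have hii : IntervalIntegrable (fun s => iteratedDeriv (n + 1) g (A + s * d)) volume 0 c :=
    (hcont.comp (by continuity)).intervalIntegrable 0 c
  have := intervalIntegral.integral_eq_sub_of_hasDerivAt H hii
  rw [MeasureTheory.integral_Icc_eq_integral_Ioc, ← intervalIntegral.integral_of_le hc, this]
  simp [sub_div]


lemma dd_general {ι : Type*} [DecidableEq ι] (g : ℝ → ℝ) (y : ι → ℝ) (s : Finset ι)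
    (hy : Set.InjOn y s) {a b : ι} (ha : a ∈ s) (hb : b ∈ s) (hab : a ≠ b) :
    ∑ j ∈ s, g (y j) / ∏ i ∈ s.erase j, (y j - y i)
      = ((∑ j ∈ s.erase a, g (y j) / ∏ i ∈ (s.erase a).erase j, (y j - y i))
        - ∑ j ∈ s.erase b, g (y j) / ∏ i ∈ (s.erase b).erase j, (y j - y i))
        / (y b - y a) := by
  have hyne : ∀ {i j}, i ∈ s → j ∈ s → i ≠ j → y i - y j ≠ 0 := fun hi hj hij =>
    sub_ne_zero.2 fun h => hij (hy hi hj h)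
  have hba : y b - y a ≠ 0 := hyne hb ha hab.symm
  have hprod : ∀ (u : Finset ι), u ⊆ s → ∀ j ∈ s, j ∉ u → (∏ i ∈ u, (y j - y i)) ≠ 0 := by
    intro u hu j hj hju
    refine Finset.prod_ne_zero_iff.2 fun i hi => sub_ne_zero.2 fun h => hju ?_
    rwa [hy hj (hu hi) h]
  set T : ι → ℝ := fun j => g (y j) / ∏ i ∈ s.erase j, (y j - y i) with hTdef
  set G1 : ι → ℝ := fun j => g (y j) / ∏ i ∈ (s.erase a).erase j, (y j - y i) with hG1def
  set G2 : ι → ℝ := fun j => g (y j) / ∏ i ∈ (s.erase b).erase j, (y j - y i) with hG2def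
  rw [eq_div_iff hba]
  have e1 : ∑ j ∈ s.erase a, G1 j = ∑ j ∈ s, G1 j - G1 a := by
    rw [← Finset.add_sum_erase s G1 ha]; ring
  have e2 : ∑ j ∈ s.erase b, G2 j = ∑ j ∈ s, G2 j - G2 b := by
    rw [← Finset.add_sum_erase s G2 hb]; ring
  rw [e1, e2]
  have key : ∀ j ∈ s, T j * (y b - y a)
      = (G1 j - G2 j) + ((if j = a then -G1 a else 0) + (if j = b then G2 b else 0)) := by
    intro j hj
    by_cases hja : j = a
    · subst hja
      rw [if_pos rfl, if_neg hab]
      have hbj : b ∈ s.erase j := Finset.mem_erase.2 ⟨fun h => hab h.symm, hb⟩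
      have h1 : (∏ i ∈ s.erase j, (y j - y i))
          = (y j - y b) * ∏ i ∈ (s.erase b).erase j, (y j - y i) := by
        rw [← Finset.mul_prod_erase _ _ hbj, Finset.erase_right_comm]
      have hQ := hprod ((s.erase b).erase j)
        ((Finset.erase_subset _ _).trans (Finset.erase_subset _ _)) j hj
        (fun hc => (Finset.mem_erase.1 hc).1 rfl)
      have core : T j * (y b - y j) = -G2 j := by
        simp only [hTdef, hG2def]
        rw [h1]
        field_simp [hQ, hyne hj hb hab]
        ring
      rw [core]
      ring
    · by_cases hjb : j = b
      · subst hjb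
        rw [if_neg hja, if_pos rfl]
        have haj : a ∈ s.erase j := Finset.mem_erase.2 ⟨hab, ha⟩
        have h1 : (∏ i ∈ s.erase j, (y j - y i))
            = (y j - y a) * ∏ i ∈ (s.erase a).erase j, (y j - y i) := by
          rw [← Finset.mul_prod_erase _ _ haj, Finset.erase_right_comm]
        have hP := hprod ((s.erase a).erase j)
          ((Finset.erase_subset _ _).trans (Finset.erase_subset _ _)) j hj
          (fun hc => (Finset.mem_erase.1 hc).1 rfl)
        have core : T j * (y j - y a) = G1 j := by
          simp only [hTdef, hG1def]
          rw [h1]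
          field_simp [hP, hyne hj ha hja]
        rw [core]
        ring
      · rw [if_neg hja, if_neg hjb]
        have haj : a ∈ s.erase j := Finset.mem_erase.2 ⟨fun h => hja h.symm, ha⟩
        have hbj : b ∈ s.erase j := Finset.mem_erase.2 ⟨fun h => hjb h.symm, hb⟩
        have h1 : (∏ i ∈ s.erase j, (y j - y i))
            = (y j - y a) * ∏ i ∈ (s.erase a).erase j, (y j - y i) := by
          rw [← Finset.mul_prod_erase _ _ haj, Finset.erase_right_comm]
        have h2 : (∏ i ∈ s.erase j, (y j - y i))
            = (y j - y b) * ∏ i ∈ (s.erase b).erase j, (y j - y i) := by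
          rw [← Finset.mul_prod_erase _ _ hbj, Finset.erase_right_comm]
        have e1' : G1 j = g (y j) * (y j - y a) / ∏ i ∈ s.erase j, (y j - y i) := by
          simp only [hG1def]
          rw [h1, mul_comm (g (y j)) (y j - y a),
            mul_div_mul_left _ _ (hyne hj ha hja)]
        have e2' : G2 j = g (y j) * (y j - y b) / ∏ i ∈ s.erase j, (y j - y i) := by
          simp only [hG2def]
          rw [h2, mul_comm (g (y j)) (y j - y b),
            mul_div_mul_left _ _ (hyne hj hb hjb)]
        rw [e1', e2']
        simp only [hTdef]
        rw [div_sub_div_same, div_mul_eq_mul_div]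
        -- congr 1
        ring
  have hsum := Finset.sum_congr rfl key
  rw [← Finset.sum_mul] at hsum
  rw [hsum, Finset.sum_add_distrib, Finset.sum_add_distrib, Finset.sum_sub_distrib,
    Finset.sum_ite_eq' s a (fun _ => -G1 a), Finset.sum_ite_eq' s b (fun _ => G2 b),
    if_pos ha, if_pos hb]
  ring


lemma erase_prod_reindex (n : ℕ) (p : Fin (n + 2)) (k : Fin (n + 1)) (G : Fin (n + 2) → ℝ) :
    ∏ i ∈ (Finset.univ.erase p).erase (p.succAbove k), G i
      = ∏ i ∈ Finset.univ.erase k, G (p.succAbove i) := by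
  refine (Finset.prod_bij (fun (i : Fin (n + 1)) _ => p.succAbove i) ?_ ?_ ?_ ?_).symm
  · intro i hi
    exact Finset.mem_erase.2 ⟨fun h => (Finset.mem_erase.1 hi).1
        (Fin.succAbove_right_injective h),
      Finset.mem_erase.2 ⟨Fin.succAbove_ne p i, Finset.mem_univ _⟩⟩
  · intro a _ b _ h
    exact Fin.succAbove_right_injective h
  · intro m hm
    obtain ⟨l, hl⟩ := Fin.exists_succAbove_eq (Finset.mem_erase.1 (Finset.mem_erase.1 hm).2).1
    exact ⟨l, Finset.mem_erase.2 ⟨fun h => (Finset.mem_erase.1 hm).1 (by rw [← hl, h]),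
      Finset.mem_univ _⟩, hl⟩
  · intros; rfl

lemma dd_reindex (n : ℕ) (p : Fin (n + 2)) (g : ℝ → ℝ) (x : Fin (n + 2) → ℝ) :
    ∑ j ∈ Finset.univ.erase p, g (x j) / ∏ i ∈ (Finset.univ.erase p).erase j, (x j - x i)
      = ∑ k : Fin (n + 1), g (x (p.succAbove k))
          / ∏ i ∈ Finset.univ.erase k, (x (p.succAbove k) - x (p.succAbove i)) := by
  have hsum : ∀ F : Fin (n + 2) → ℝ,
      ∑ j ∈ Finset.univ.erase p, F j = ∑ k : Fin (n + 1), F (p.succAbove k) := by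
    intro F
    have h := Fin.sum_univ_succAbove F p
    have h2 := Finset.add_sum_erase Finset.univ F (Finset.mem_univ p)
    linarith
  rw [hsum (fun j => g (x j) / ∏ i ∈ (Finset.univ.erase p).erase j, (x j - x i))]
  exact Finset.sum_congr rfl fun k _ => by rw [erase_prod_reindex]


theorem key : ∀ (n : ℕ) (g : ℝ → ℝ), ContDiff ℝ n g → ∀ x : Fin (n + 1) → ℝ,
    Function.Injective x →
    ∑ j, g (x j) / ∏ i ∈ Finset.univ.erase j, (x j - x i)
      = ∫ t in simplex n, iteratedDeriv n g ((1 - ∑ i, t i) * x 0 + ∑ i, t i * x i.succ) := by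
  intro n
  induction n with
  | zero =>
    intro g hg x hx
    have hset : simplex 0 = Set.univ := by
      ext t; simp [simplex]
    have hfun : (fun t : Fin 0 → ℝ =>
        iteratedDeriv 0 g ((1 - ∑ i, t i) * x 0 + ∑ i, t i * x i.succ)) = fun _ => g (x 0) := by
      funext t; simp
    rw [hset, Measure.restrict_univ, hfun, MeasureTheory.integral_const]
    have hvol : (volume : Measure (Fin 0 → ℝ)) Set.univ = 1 := by
      rw [MeasureTheory.volume_pi, Measure.pi_univ]
      simp
    rw [measureReal_def, hvol]
    simp
  | succ n IH =>
    intro g hg x hx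
    set d : ℝ := x 1 - x 0 with hd_def
    have h10 : (0 : Fin (n + 2)) ≠ 1 := Fin.zero_ne_one'
    have hd : d ≠ 0 := sub_ne_zero.2 fun h => h10 (hx h).symm
    set B1 : (Fin n → ℝ) → ℝ := fun u => (1 - ∑ i, u i) * x 1 + ∑ i, u i * x i.succ.succ
      with hB1
    set B2 : (Fin n → ℝ) → ℝ := fun u => (1 - ∑ i, u i) * x 0 + ∑ i, u i * x i.succ.succ
      with hB2
    have hgc : Continuous (iteratedDeriv (n + 1) g) :=
      hg.continuous_iteratedDeriv (n + 1) le_rfl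
    have hfc : Continuous fun t : Fin (n + 1) → ℝ =>
        iteratedDeriv (n + 1) g ((1 - ∑ i, t i) * x 0 + ∑ i, t i * x i.succ) :=
      hgc.comp (((continuous_const.sub
          (continuous_finset_sum _ fun i _ => continuous_apply i)).mul continuous_const).add
        (continuous_finset_sum _ fun i _ => (continuous_apply i).mul continuous_const))
    rw [simplex_slice n _ hfc]
    have hstep : Set.EqOn
        (fun u : Fin n → ℝ => ∫ s in Set.Icc 0 (1 - ∑ i, u i),
          iteratedDeriv (n + 1) g ((1 - ∑ i, (Fin.cons s u : Fin (n + 1) → ℝ) i) * x 0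
            + ∑ i, (Fin.cons s u : Fin (n + 1) → ℝ) i * x i.succ))
        (fun u : Fin n → ℝ =>
          (iteratedDeriv n g (B1 u) - iteratedDeriv n g (B2 u)) / d)
        (simplex n) := by
      intro u hu
      have harg : ∀ s : ℝ, (1 - ∑ i, (Fin.cons s u : Fin (n + 1) → ℝ) i) * x 0 + ∑ i, (Fin.cons s u : Fin (n + 1) → ℝ) i * x i.succ
          = B2 u + s * d := by
        intro s
        rw [Fin.sum_cons, Fin.sum_univ_succ (f := fun i : Fin (n + 1) => (Fin.cons s u : Fin (n + 1) → ℝ) i * x i.succ)]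
        simp only [Fin.cons_zero, Fin.cons_succ, Fin.succ_zero_eq_one', hB2, hd_def]
        ring
      simp only [harg]
      rw [ftc n g hg (B2 u) d (1 - ∑ i, u i) hd (by linarith [hu.2])]
      have : B2 u + (1 - ∑ i, u i) * d = B1 u := by
        simp only [hB1, hB2, hd_def]; ring
      rw [this]
    rw [MeasureTheory.setIntegral_congr_fun (measurableSet_simplex n) hstep]
    have hB1c : Continuous (fun u => iteratedDeriv n g (B1 u)) := by
      refine (hg.continuous_iteratedDeriv n (by exact_mod_cast Nat.le_succ n)).comp ?_
      exact ((continuous_const.sub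
          (continuous_finset_sum _ fun i _ => continuous_apply i)).mul continuous_const).add
        (continuous_finset_sum _ fun i _ => (continuous_apply i).mul continuous_const)
    have hB2c : Continuous (fun u => iteratedDeriv n g (B2 u)) := by
      refine (hg.continuous_iteratedDeriv n (by exact_mod_cast Nat.le_succ n)).comp ?_
      exact ((continuous_const.sub
          (continuous_finset_sum _ fun i _ => continuous_apply i)).mul continuous_const).add
        (continuous_finset_sum _ fun i _ => (continuous_apply i).mul continuous_const)
    have hI1 : IntegrableOn (fun u => iteratedDeriv n g (B1 u)) (simplex n) :=
      hB1c.continuousOn.integrableOn_compact (isCompact_simplex n)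
    have hI2 : IntegrableOn (fun u => iteratedDeriv n g (B2 u)) (simplex n) :=
      hB2c.continuousOn.integrableOn_compact (isCompact_simplex n)
    rw [MeasureTheory.integral_div, MeasureTheory.integral_sub hI1 hI2]
    have hgn : ContDiff ℝ n g := hg.of_le (by exact_mod_cast Nat.le_succ n)
    -- first IH : points x ∘ succ
    have IH1 := IH g hgn (x ∘ Fin.succ) (hx.comp (Fin.succ_injective _))
    have hB1eq : ∀ u : Fin n → ℝ,
        (1 - ∑ i, u i) * (x ∘ Fin.succ) 0 + ∑ i, u i * (x ∘ Fin.succ) i.succ = B1 u := by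
      intro u
      simp only [Function.comp_apply, Fin.succ_zero_eq_one', hB1]
    simp only [Function.comp_apply] at IH1
    rw [show ((fun t : Fin n → ℝ =>
        iteratedDeriv n g ((1 - ∑ i, t i) * x (Fin.succ 0) + ∑ i, t i * x i.succ.succ)))
        = fun u => iteratedDeriv n g (B1 u) from funext fun u => by
          rw [Fin.succ_zero_eq_one']] at IH1
    -- second IH : points x ∘ succAbove 1
    have IH2 := IH g hgn (x ∘ (1 : Fin (n + 2)).succAbove)
      (hx.comp Fin.succAbove_right_injective)
    simp only [Function.comp_apply] at IH2
    rw [show ((fun t : Fin n → ℝ => iteratedDeriv n g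
        ((1 - ∑ i, t i) * x ((1 : Fin (n + 2)).succAbove 0)
          + ∑ i, t i * x ((1 : Fin (n + 2)).succAbove i.succ))))
        = fun u => iteratedDeriv n g (B2 u) from funext fun u => by
          rw [Fin.one_succAbove_zero]
          simp only [Fin.one_succAbove_succ]
          rfl] at IH2
    rw [← IH1, ← IH2]
    -- now pure algebra on divided differences
    rw [dd_general g x Finset.univ hx.injOn (Finset.mem_univ 0) (Finset.mem_univ 1) h10]
    rw [dd_reindex n 0 g x, dd_reindex n 1 g x]
    simp only [Fin.succAbove_zero_apply]
    rfl


end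

end HG

/-- Hermite–Genocchi formula: for an `n`-times continuously differentiable function `g`
and `n+1` distinct points `x_0,…,x_n`, the divided difference
`∑_j g(x_j)/∏_{i≠j}(x_j − x_i)` equals the integral of `g^{(n)}` evaluated at convex
combinations of the points, over the probability simplex. -/
theorem stmt7 {n : ℕ} (g : ℝ → ℝ) (hg : ContDiff ℝ n g)
    (x : Fin (n + 1) → ℝ) (hx : Function.Injective x) :
    ∑ j, g (x j) / ∏ i ∈ Finset.univ.erase j, (x j - x i)
      = ∫ t in {t : Fin n → ℝ | (∀ i, 0 ≤ t i) ∧ ∑ i, t i ≤ 1},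
          iteratedDeriv n g ((1 - ∑ i, t i) * x 0 + ∑ i, t i * x i.succ) := by
  exact HG.key n g hg x hx
end
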